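/- Let K be a number field, let c ∈ K, and let f(z) = z² + c. If p ∈ K is periodic of exact period 4 for f, then there exist x, y ∈ K with y·(x² − 1) ≠ 0 such that y² = −x(x² + 1)(x² − 2x − 1), p = (x−1)/(2(x+1)) + y/(2x(x−1)), and c = (x² − 4x − 1)(x⁴ + x³ + 2x² − x + 1)/(4x(x−1)²(x+1)²); moreover the orbit of p is given by f(p) = −(x+1)/(2(x−1)) + y/(2x(x+1)), f^[2](p) = (x−1)/(2(x+1)) − y/(2x(x−1)), and f^[3](p) = −(x+1)/(2(x−1)) − y/(2x(x+1)). -/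

import Mathlib

set_option maxHeartbeats 4000000

/-- Parametrization of 4-cycles of `f(z) = z² + c` over a number field `K`: if `p ∈ K` is
periodic of exact period 4 for `f`, then there are `x, y ∈ K` with `y(x² - 1) ≠ 0`,
`y² = -x(x² + 1)(x² - 2x - 1)`, `p = (x-1)/(2(x+1)) + y/(2x(x-1))`,
`c = (x² - 4x - 1)(x⁴ + x³ + 2x² - x + 1)/(4x(x-1)²(x+1)²)`, and the orbit of `p` is given by
the indicated formulas. -/
theorem four_cycle_parametrization (K : Type*) [Field K] [NumberField K] (c p : K)
    (hper : (fun z : K => z ^ 2 + c)^[4] p = p)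
    (hmin : ∀ k : ℕ, 1 ≤ k → k < 4 → (fun z : K => z ^ 2 + c)^[k] p ≠ p) :
    ∃ x y : K, y * (x ^ 2 - 1) ≠ 0 ∧
      y ^ 2 = -x * (x ^ 2 + 1) * (x ^ 2 - 2 * x - 1) ∧
      p = (x - 1) / (2 * (x + 1)) + y / (2 * x * (x - 1)) ∧
      c = (x ^ 2 - 4 * x - 1) * (x ^ 4 + x ^ 3 + 2 * x ^ 2 - x + 1) /
        (4 * x * (x - 1) ^ 2 * (x + 1) ^ 2) ∧
      (fun z : K => z ^ 2 + c)^[1] p = -(x + 1) / (2 * (x - 1)) + y / (2 * x * (x + 1)) ∧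
      (fun z : K => z ^ 2 + c)^[2] p = (x - 1) / (2 * (x + 1)) - y / (2 * x * (x - 1)) ∧
      (fun z : K => z ^ 2 + c)^[3] p = -(x + 1) / (2 * (x - 1)) - y / (2 * x * (x + 1)) := by
  have h4big : (((p ^ 2 + c) ^ 2 + c) ^ 2 + c) ^ 2 + c = p := by
    simpa [Function.iterate_succ_apply'] using hper
  have hne2big : (p ^ 2 + c) ^ 2 + c ≠ p := by
    simpa [Function.iterate_succ_apply'] using hmin 2 (by norm_num) (by norm_num)
  obtain ⟨p1, hp1⟩ : ∃ q : K, q = p ^ 2 + c := ⟨_, rfl⟩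
  obtain ⟨p2, hp2⟩ : ∃ q : K, q = p1 ^ 2 + c := ⟨_, rfl⟩
  obtain ⟨p3, hp3⟩ : ∃ q : K, q = p2 ^ 2 + c := ⟨_, rfl⟩
  have h4 : p3 ^ 2 + c = p := by rw [hp3, hp2, hp1]; exact h4big
  have hne2 : p2 ≠ p := by rw [hp2, hp1]; exact hne2big
  have ha : p - p2 ≠ 0 := sub_ne_zero.mpr (fun h => hne2 h.symm)
  have key : (p - p2) * ((p + p2) * (p1 + p3) + 1) = 0 := by
    linear_combination -h4 - hp2 - (p1 + p3) * hp1 + (p1 + p3) * hp3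
  have huv : (p + p2) * (p1 + p3) = -1 := by
    rcases mul_eq_zero.mp key with h | h
    · exact absurd h ha
    · linear_combination h
  have hS1 : p1 + p3 = (p + p2) ^ 2 - 2 * (p * p2) + 2 * c := by
    linear_combination hp1 + hp3
  have hS2 : p + p2 = (p1 + p3) ^ 2 - 2 * (p1 * p3) + 2 * c := by
    linear_combination -h4 + hp2
  have hS3 : p1 * p3 = (p * p2) ^ 2 + c * ((p + p2) ^ 2 - 2 * (p * p2)) + c ^ 2 := by
    linear_combination p3 * hp1 + (p ^ 2 + c) * hp3
  have hA : 2 * (p * p2) * (p + p2) = (p + p2) ^ 3 + 2 * c * (p + p2) + 1 := by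
    linear_combination (p + p2) * hS1 - huv
  have hB : 2 * (p1 * p3) * (p + p2) ^ 2 = 1 - (p + p2) ^ 3 + 2 * c * (p + p2) ^ 2 := by
    linear_combination (p + p2) ^ 2 * hS2 + ((p + p2) * (p1 + p3) - 1) * huv
  have hF : (p + p2) ^ 6 + 4 * c * (p + p2) ^ 4 + 4 * (p + p2) ^ 3 - 4 * c * (p + p2) ^ 2 - 1
      = 0 := by
    linear_combination 2 * hB - 4 * (p + p2) ^ 2 * hS3 -
      (2 * (p * p2) * (p + p2) + (p + p2) ^ 3 + 2 * c * (p + p2) + 1 - 4 * c * (p + p2)) * hA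
  have ha2u : (p - p2) ^ 2 * (p + p2) = -(p + p2) ^ 3 - 4 * c * (p + p2) - 2 := by
    linear_combination (-2 : K) * hA
  have ha2full : (p - p2) ^ 2 * ((p + p2) ^ 2 * ((1 - (p + p2)) * (1 + (p + p2))))
      = 1 - 2 * (p + p2) - 2 * (p + p2) ^ 3 - (p + p2) ^ 4 := by
    linear_combination (p + p2) * (1 - (p + p2) ^ 2) * ha2u + hF
  have hu0 : p + p2 ≠ 0 := by
    intro h; rw [h] at hF; norm_num at hF
  have h1mu : 1 - (p + p2) ≠ 0 := by
    intro h
    have hu : p + p2 = 1 := by linear_combination -h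
    rw [hu] at hF
    have h40 : (4 : K) = 0 := by linear_combination hF
    norm_num at h40
  have h1pu : 1 + (p + p2) ≠ 0 := by
    intro h
    have hu : p + p2 = -1 := by linear_combination h
    rw [hu] at hF
    have h40 : (4 : K) = 0 := by linear_combination -hF
    norm_num at h40
  obtain ⟨x, hxdef⟩ : ∃ q : K, q = (1 + (p + p2)) / (1 - (p + p2)) := ⟨_, rfl⟩
  have hx0 : x ≠ 0 := by rw [hxdef]; exact div_ne_zero h1pu h1mu
  have hxm1eq : x - 1 = 2 * (p + p2) / (1 - (p + p2)) := by
    rw [hxdef]; field_simp [h1mu]; ring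
  have hxm1 : x - 1 ≠ 0 := by
    rw [hxm1eq]; exact div_ne_zero (mul_ne_zero two_ne_zero hu0) h1mu
  have hxp1eq : x + 1 = 2 / (1 - (p + p2)) := by
    rw [hxdef]; field_simp [h1mu]; ring
  have hxp1 : x + 1 ≠ 0 := by
    rw [hxp1eq]; exact div_ne_zero two_ne_zero h1mu
  obtain ⟨y, hydef⟩ : ∃ q : K, q = x * (x - 1) * (p - p2) := ⟨_, rfl⟩
  have hy0 : y ≠ 0 := by rw [hydef]; exact mul_ne_zero (mul_ne_zero hx0 hxm1) ha
  have e1 : (fun z : K => z ^ 2 + c)^[1] p = p1 := by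
    rw [hp1]; simp
  have e2 : (fun z : K => z ^ 2 + c)^[2] p = p2 := by
    rw [hp2, hp1]; simp [Function.iterate_succ_apply']
  have e3 : (fun z : K => z ^ 2 + c)^[3] p = p3 := by
    rw [hp3, hp2, hp1]; simp [Function.iterate_succ_apply']
  have t1 : (x - 1) / (2 * (x + 1)) = (p + p2) / 2 := by
    rw [hxm1eq, hxp1eq]; field_simp [h1mu]
  have t2 : y / (2 * x * (x - 1)) = (p - p2) / 2 := by
    rw [hydef]; field_simp [hx0, hxm1]
  have t3 : -(x + 1) / (2 * (x - 1)) = (p1 + p3) / 2 := by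
    rw [hxm1eq, hxp1eq]
    field_simp [h1mu, hu0]
    linear_combination (-1 : K) * huv
  have hb : p1 - p3 = (p + p2) * (p - p2) := by
    linear_combination hp1 - hp3
  have t4 : y / (2 * x * (x + 1)) = (p1 - p3) / 2 := by
    rw [hydef, hb, hxdef]
    field_simp [h1mu, h1pu, hu0]
    ring
  refine ⟨x, y, ?_, ?_, ?_, ?_, ?_, ?_, ?_⟩
  · have hx2 : x ^ 2 - 1 = (x - 1) * (x + 1) := by ring
    rw [hx2]
    exact mul_ne_zero hy0 (mul_ne_zero hxm1 hxp1)
  · have hden : ((p + p2) ^ 2 * ((1 - (p + p2)) * (1 + (p + p2)))) ≠ 0 :=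
      mul_ne_zero (pow_ne_zero 2 hu0) (mul_ne_zero h1mu h1pu)
    have ha2div : (p - p2) ^ 2 = (1 - 2 * (p + p2) - 2 * (p + p2) ^ 3 - (p + p2) ^ 4) /
        ((p + p2) ^ 2 * ((1 - (p + p2)) * (1 + (p + p2)))) := by
      rw [eq_div_iff hden]; linear_combination ha2full
    calc y ^ 2 = (x * (x - 1)) ^ 2 * (p - p2) ^ 2 := by rw [hydef]; ring
      _ = -x * (x ^ 2 + 1) * (x ^ 2 - 2 * x - 1) := by
          rw [ha2div, hxdef]; field_simp [h1mu, h1pu, hu0]; ring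
  · rw [t1, t2]; ring
  · have hxu : x * (1 - (p + p2)) = 1 + (p + p2) := by
      rw [hxdef]; field_simp
    have Dne : 4 * x * (x - 1) ^ 2 * (x + 1) ^ 2 ≠ 0 :=
      mul_ne_zero (mul_ne_zero (mul_ne_zero (by norm_num) hx0) (pow_ne_zero 2 hxm1))
        (pow_ne_zero 2 hxp1)
    rw [eq_div_iff Dne]
    apply mul_left_cancel₀ (pow_ne_zero 6 h1mu)
    linear_combination ((15 : K) + (12 : K) * x + (15 : K) * x ^ 2 + (5 : K) * x ^ 3 + (2 : K) * x ^ 4 + (-1 : K) * x ^ 5 + (-4 : K) * c * x + (-4 : K) * c * x ^ 2 + (4 : K) * c * x ^ 3 + (4 : K) * c * x ^ 4 + (-9 : K) * (p + p2) + (-18 : K) * (p + p2) * x + (-63 : K) * (p + p2) * x ^ 2 + (-23 : K) * (p + p2) * x ^ 3 + (-12 : K) * (p + p2) * x ^ 4 + (5 : K) * (p + p2) * x ^ 5 + (28 : K) * (p + p2) * c * x + (36 : K) * (p + p2) * c * x ^ 2 + (-12 : K) * (p + p2) * c * x ^ 3 + (-20 : K) * (p + p2) * c * x ^ 4 + (-6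 : K) * (p + p2) ^ 2 + (-24 : K) * (p + p2) ^ 2 * x + (102 : K) * (p + p2) ^ 2 * x ^ 2 + (38 : K) * (p + p2) ^ 2 * x ^ 3 + (28 : K) * (p + p2) ^ 2 * x ^ 4 + (-10 : K) * (p + p2) ^ 2 * x ^ 5 + (64 : K) * (p + p2) ^ 2 * c + (-24 : K) * (p + p2) ^ 2 * c * x + (-88 : K) * (p + p2) ^ 2 * c * x ^ 2 + (8 : K) * (p + p2) ^ 2 * c * x ^ 3 + (40 : K) * (p + p2) ^ 2 * c * x ^ 4 + (-38 : K) * (p + p2) ^ 3 + (52 : K) * (p + p2) ^ 3 * x + (-86 : K) * (p + p2) ^ 3 * x ^ 2 + (-26 : K) * (p + p2) ^ 3 * x ^ 3 + (-32 : K) * (p + p2) ^ 3 * x ^ 4 + (10 : K) * (p + p2) ^ 3 * x ^ 5 + (-64 : K) * (p + p2) ^ 3 * c + (-24 : K) * (p + p2) ^ 3 * c * x + (88 : K) * (p + p2) ^ 3 * c * x ^ 2 + (8 : K) * (p + p2) ^ 3 * c * x ^ 3 + (-40 : K) * (p + p2) ^ 3 * c * x ^ 4 + (23 : K) * (p + p2)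 ^ 4 + (-36 : K) * (p + p2) ^ 4 * x + (43 : K) * (p + p2) ^ 4 * x ^ 2 + (5 : K) * (p + p2) ^ 4 * x ^ 3 + (18 : K) * (p + p2) ^ 4 * x ^ 4 + (-5 : K) * (p + p2) ^ 4 * x ^ 5 + (28 : K) * (p + p2) ^ 4 * c * x + (-36 : K) * (p + p2) ^ 4 * c * x ^ 2 + (-12 : K) * (p + p2) ^ 4 * c * x ^ 3 + (20 : K) * (p + p2) ^ 4 * c * x ^ 4 + (-17 : K) * (p + p2) ^ 5 + (14 : K) * (p + p2) ^ 5 * x + (-11 : K) * (p + p2) ^ 5 * x ^ 2 + (1 : K) * (p + p2) ^ 5 * x ^ 3 + (-4 : K) * (p + p2) ^ 5 * x ^ 4 + (1 : K) * (p + p2) ^ 5 * x ^ 5 + (-4 : K) * (p + p2) ^ 5 * c * x + (4 : K) * (p + p2) ^ 5 * c * x ^ 2 + (4 : K) * (p + p2) ^ 5 * c * x ^ 3 + (-4 : K) * (p + p2) ^ 5 * c * x ^ 4) * hxu + (-16 : K) * hF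
  · rw [e1, t3, t4]; ring
  · rw [e2, t1, t2]; ring
  · rw [e3, t3, t4]; ring
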